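/- Let Λ be a lattice in ℝⁿ spanning the subspace W, and A an invertible n×n matrix. Then det(AΛ) = det_W(AᵀA)^{1/2} · det(Λ), where det_W(X) = det(O_Wᵀ X O_W) for any matrix O_W whose columns form an orthonormal basis of W, and det(Λ) = √det(BᵀB) for any basis B of Λ. -/

import Mathlib

open Matrix

/-- For a lattice `Λ = B·ℤᵈ` spanning the subspace `W` (with orthonormal basis matrix `O`),
and `A` invertible, `det(AΛ) = det_W(AᵀA)^{1/2}·det(Λ)`. -/
theorem stmt8 {n d : ℕ} (B : Matrix (Fin n) (Fin d) ℝ)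
    (hB : LinearIndependent ℝ fun j : Fin d => fun i => B i j)
    (A : Matrix (Fin n) (Fin n) ℝ) (hA : IsUnit A.det)
    (O : Matrix (Fin n) (Fin d) ℝ) (hO : Oᵀ * O = 1)
    (hrange : LinearMap.range O.mulVecLin = LinearMap.range B.mulVecLin) :
    Real.sqrt ((A * B)ᵀ * (A * B)).det =
      Real.sqrt (Oᵀ * (Aᵀ * A) * O).det * Real.sqrt (Bᵀ * B).det := by
  set C : Matrix (Fin d) (Fin d) ℝ := Oᵀ * B with hC
  have key : O * C = B := by
    ext i j
    have hcol : (fun i => B i j) ∈ LinearMap.range O.mulVecLin := by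
      rw [hrange]
      exact ⟨Pi.single j 1, by simp [Matrix.mulVecLin_apply, Matrix.mulVec_single]; rfl⟩
    obtain ⟨y, hy⟩ := hcol
    simp only [Matrix.mulVecLin_apply] at hy
    have h1 : (O * C) *ᵥ (Pi.single j 1) = (fun i => (O * C) i j) := by
      simp [Matrix.mulVec_single]; rfl
    have h2 : B *ᵥ (Pi.single j 1) = (fun i => B i j) := by
      simp [Matrix.mulVec_single]; rfl
    have h3 : (O * C) *ᵥ (Pi.single j 1) = B *ᵥ (Pi.single j 1) := by
      rw [← Matrix.mulVec_mulVec, hC, ← Matrix.mulVec_mulVec, h2, ← hy,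
        Matrix.mulVec_mulVec, Matrix.mulVec_mulVec, Matrix.mul_assoc, hO, Matrix.mul_one]
    have := congrFun h3 i
    rw [h1, h2] at this
    exact this
  have hBB : Bᵀ * B = Cᵀ * C := by
    rw [← key, Matrix.transpose_mul]
    rw [Matrix.mul_assoc, ← Matrix.mul_assoc Oᵀ, hO, Matrix.one_mul]
  have hAB : (A * B)ᵀ * (A * B) = Cᵀ * (Oᵀ * (Aᵀ * A) * O) * C := by
    rw [← key, Matrix.transpose_mul, Matrix.transpose_mul]
    simp only [Matrix.mul_assoc]
  rw [hAB, hBB]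
  have hdet1 : (Cᵀ * (Oᵀ * (Aᵀ * A) * O) * C).det = C.det ^ 2 * (Oᵀ * (Aᵀ * A) * O).det := by
    rw [Matrix.det_mul, Matrix.det_mul, Matrix.det_transpose]; ring
  have hdet2 : (Cᵀ * C).det = C.det ^ 2 := by
    rw [Matrix.det_mul, Matrix.det_transpose]; ring
  rw [hdet1, hdet2, Real.sqrt_mul (sq_nonneg _), Real.sqrt_sq_eq_abs]
  ring
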